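/- arXiv:2503.04060 — 3 statements merged into one kernel-verified Lean document; each statement's English description precedes it below -/
import Mathlib

section
/- For the Erdős–Rényi random graph G(n,p) and integers 1 <= m, l <= n-1, the covariance of the numbers of (m+1)-stars S_{m+1,n}^{(1)} and (l+1)-stars S_{l+1,n}^{(1)} both centered at vertex 1 equals sum_{s = max(1, m+l-n+1)}^{min(m,l)} multinomial(n-1; s, m-s, l-s, n-m-l+s-1) * p^{m+l-s} * (1 - p^s), where multinomial(n-1; a,b,c,d) = (n-1)!/(a! b! c! d!). -/
open MeasureTheory ProbabilityTheory Finset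

private lemma prod_mul_prod_union_01 {α : Type*} [DecidableEq α] (A B : Finset α) (f : α → ℝ)
    (hf : ∀ j, f j = 0 ∨ f j = 1) :
    (∏ j ∈ A, f j) * ∏ j ∈ B, f j = ∏ j ∈ A ∪ B, f j := by
  by_cases h : ∀ j ∈ A ∩ B, f j = 1
  · rw [← Finset.prod_union_inter, Finset.prod_eq_one h, mul_one]
  · push_neg at h
    obtain ⟨j, hj, hfj⟩ := h
    have hj0 : f j = 0 := (hf j).resolve_right hfj
    have hjA : j ∈ A := Finset.mem_of_mem_inter_left hj
    rw [Finset.prod_eq_zero hjA hj0, Finset.prod_eq_zero (Finset.mem_union_left _ hjA) hj0,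
      zero_mul]

private lemma count_inner {α : Type*} [DecidableEq α] (E A : Finset α) (hA : A ⊆ E)
    (l s : ℕ) (hsl : s ≤ l) :
    ((E.powersetCard l).filter (fun B => (A ∩ B).card = s)).card
      = A.card.choose s * (E.card - A.card).choose (l - s) := by
  rw [← Finset.card_powersetCard, ← Finset.card_sdiff_of_subset hA, ← Finset.card_powersetCard,
    ← Finset.card_product]
  apply Finset.card_nbij' (fun B => (A ∩ B, B \ A)) (fun q => q.1 ∪ q.2)
  · intro B hB
    simp only [Finset.mem_coe, Finset.mem_filter, Finset.mem_powersetCard] at hB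
    obtain ⟨⟨hBE, hBl⟩, hs⟩ := hB
    have hcard := Finset.card_sdiff_add_card_inter B A
    rw [Finset.inter_comm B A] at hcard
    simp only [Finset.mem_coe, Finset.mem_product, Finset.mem_powersetCard]
    refine ⟨⟨Finset.inter_subset_left, hs⟩, ?_, by omega⟩
    intro x hx
    rw [Finset.mem_sdiff] at hx ⊢
    exact ⟨hBE hx.1, hx.2⟩
  · intro q hq
    simp only [Finset.mem_coe, Finset.mem_product, Finset.mem_powersetCard] at hq
    obtain ⟨⟨hCA, hCs⟩, hDE, hDcard⟩ := hq
    have hdisj : Disjoint q.1 q.2 := by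
      refine Finset.disjoint_left.mpr fun x hx hx2 => ?_
      exact (Finset.mem_sdiff.mp (hDE hx2)).2 (hCA hx)
    have hAq : A ∩ (q.1 ∪ q.2) = q.1 := by
      ext x
      simp only [Finset.mem_inter, Finset.mem_union]
      constructor
      · rintro ⟨hxA, hx1 | hx2⟩
        · exact hx1
        · exact absurd hxA (Finset.mem_sdiff.mp (hDE hx2)).2
      · exact fun hx => ⟨hCA hx, Or.inl hx⟩
    simp only [Finset.mem_coe, Finset.mem_filter, Finset.mem_powersetCard]
    refine ⟨⟨?_, ?_⟩, by rw [hAq, hCs]⟩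
    · exact Finset.union_subset (hCA.trans hA) (fun x hx => (Finset.mem_sdiff.mp (hDE hx)).1)
    · rw [Finset.card_union_of_disjoint hdisj, hCs, hDcard]; omega
  · intro B hB
    ext x
    simp only [Finset.mem_union, Finset.mem_inter, Finset.mem_sdiff]
    tauto
  · intro q hq
    simp only [Finset.mem_coe, Finset.mem_product, Finset.mem_powersetCard] at hq
    obtain ⟨⟨hCA, hCs⟩, hDE, hDcard⟩ := hq
    have h1 : A ∩ (q.1 ∪ q.2) = q.1 := by
      ext x
      simp only [Finset.mem_inter, Finset.mem_union]
      constructor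
      · rintro ⟨hxA, hx1 | hx2⟩
        · exact hx1
        · exact absurd hxA (Finset.mem_sdiff.mp (hDE hx2)).2
      · exact fun hx => ⟨hCA hx, Or.inl hx⟩
    have h2 : (q.1 ∪ q.2) \ A = q.2 := by
      ext x
      simp only [Finset.mem_sdiff, Finset.mem_union]
      constructor
      · rintro ⟨hx1 | hx2, hxA⟩
        · exact absurd (hCA hx1) hxA
        · exact hx2
      · exact fun hx => ⟨Or.inr hx, (Finset.mem_sdiff.mp (hDE hx)).2⟩
    beta_reduce
    rw [h1, h2]

private lemma choose_mul_eq_multinomial (N m l s : ℕ) (hm : m ≤ N) (hs : s ≤ m) (hsl : s ≤ l)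
    (h : m + l - s ≤ N) :
    N.choose m * (m.choose s * (N - m).choose (l - s)) =
      N.factorial / (s.factorial * (m - s).factorial * (l - s).factorial *
        (N - (m - s) - (l - s) - s).factorial) := by
  have hls : l - s ≤ N - m := by omega
  have hd : N - (m - s) - (l - s) - s = N - m - (l - s) := by omega
  rw [hd]
  symm
  apply Nat.div_eq_of_eq_mul_left
  · exact Nat.mul_pos (Nat.mul_pos (Nat.mul_pos (Nat.factorial_pos _) (Nat.factorial_pos _))
      (Nat.factorial_pos _)) (Nat.factorial_pos _)
  · calc N.factorial = N.choose m * m.factorial * (N - m).factorial :=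
          (Nat.choose_mul_factorial_mul_factorial hm).symm
      _ = N.choose m * (m.choose s * s.factorial * (m - s).factorial) *
          ((N - m).choose (l - s) * (l - s).factorial * (N - m - (l - s)).factorial) := by
          rw [Nat.choose_mul_factorial_mul_factorial hs,
            Nat.choose_mul_factorial_mul_factorial hls]
      _ = _ := by ring

/-- Covariance of the numbers of `(m+1)`-stars and `(l+1)`-stars both centered at
vertex `1` (here `⟨0, _⟩ : Fin n`) in `G(n,p)`:
`Cov = ∑_s multinomial(n-1; s, m-s, l-s, n-1-m-l+s) p^{m+l-s}(1-p^s)`. -/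
theorem stmt_5 (n m l : ℕ) (hn : 2 ≤ n) (hm : 1 ≤ m) (hmn : m ≤ n - 1)
    (hl : 1 ≤ l) (hln : l ≤ n - 1)
    (p : ℝ) (hp0 : 0 ≤ p) (hp1 : p ≤ 1)
    {Ω : Type*} [MeasurableSpace Ω] (μ : Measure Ω) [IsProbabilityMeasure μ]
    (X : Fin n → Fin n → Ω → ℝ)
    (hmeas : ∀ i j, Measurable (X i j))
    (hsym : ∀ i j, X i j = X j i)
    (hdiag : ∀ i, X i i = 0)
    (h01 : ∀ i j ω, X i j ω = 0 ∨ X i j ω = 1)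
    (hbern : ∀ i j, i ≠ j → μ {ω | X i j ω = 1} = ENNReal.ofReal p)
    (hindep : iIndepFun
      (fun (q : {q : Fin n × Fin n // q.1 < q.2}) ω => X q.1.1 q.1.2 ω) μ)
    (v1 : Fin n) (hv1 : v1 = ⟨0, by omega⟩) :
    (∫ ω, (∑ A ∈ (Finset.univ.erase v1).powersetCard m, ∏ j ∈ A, X v1 j ω) *
          (∑ B ∈ (Finset.univ.erase v1).powersetCard l, ∏ j ∈ B, X v1 j ω) ∂μ) -
      (∫ ω, ∑ A ∈ (Finset.univ.erase v1).powersetCard m, ∏ j ∈ A, X v1 j ω ∂μ) *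
      (∫ ω, ∑ B ∈ (Finset.univ.erase v1).powersetCard l, ∏ j ∈ B, X v1 j ω ∂μ) =
      ∑ s ∈ Finset.Icc (max 1 (m + l + 1 - n)) (min m l),
        (((n - 1).factorial / (s.factorial * (m - s).factorial * (l - s).factorial *
            (n - 1 - (m - s) - (l - s) - s).factorial) : ℕ) : ℝ) *
          p ^ (m + l - s) * (1 - p ^ s) := by
  set E : Finset (Fin n) := Finset.univ.erase v1 with hE
  have hEcard : E.card = n - 1 := by
    rw [hE, Finset.card_erase_of_mem (Finset.mem_univ _), Finset.card_univ, Fintype.card_fin]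
  have hlt : ∀ j : Fin n, j ≠ v1 → v1 < j := by
    intro j hj
    have h1 : j.1 ≠ 0 := by
      intro h
      exact hj (by rw [hv1]; exact Fin.ext h)
    rw [hv1]
    exact Fin.lt_def.mpr (by simpa using Nat.pos_of_ne_zero h1)
  -- indicator identity
  have hind : ∀ S : Finset (Fin n),
      (fun ω => ∏ j ∈ S, X v1 j ω) =
        Set.indicator (⋂ j ∈ S, X v1 j ⁻¹' {1}) (fun _ => (1 : ℝ)) := by
    intro S
    funext ω
    by_cases h : ∀ j ∈ S, X v1 j ω = 1
    · rw [Finset.prod_eq_one h, Set.indicator_of_mem]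
      simp only [Set.mem_iInter, Set.mem_preimage, Set.mem_singleton_iff]
      exact h
    · push_neg at h
      obtain ⟨j, hj, hne⟩ := h
      rw [Finset.prod_eq_zero hj ((h01 v1 j ω).resolve_right hne), Set.indicator_of_notMem]
      simp only [Set.mem_iInter, Set.mem_preimage, Set.mem_singleton_iff, not_forall]
      exact ⟨j, hj, hne⟩
  have hImeas : ∀ S : Finset (Fin n), MeasurableSet (⋂ j ∈ S, X v1 j ⁻¹' {1}) :=
    fun S => MeasurableSet.biInter S.countable_toSet
      (fun j _ => (hmeas v1 j) (measurableSet_singleton 1))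
  have hInt : ∀ S : Finset (Fin n), Integrable (fun ω => ∏ j ∈ S, X v1 j ω) μ := by
    intro S
    rw [hind S]
    exact (integrable_const (1 : ℝ)).indicator (hImeas S)
  -- expectation of products
  have hExp : ∀ S : Finset (Fin n), S ⊆ E → ∫ ω, ∏ j ∈ S, X v1 j ω ∂μ = p ^ S.card := by
    intro S hS
    have hSlt : ∀ j ∈ S, v1 < j := fun j hj => hlt j (Finset.mem_erase.mp (hS hj)).1
    have hμ : μ (⋂ j ∈ S, X v1 j ⁻¹' {1}) = ENNReal.ofReal p ^ S.card := by
      set e : Fin n → {q : Fin n × Fin n // q.1 < q.2} := fun j =>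
        if h : v1 < j then ⟨(v1, j), h⟩ else
          ⟨(⟨0, by omega⟩, ⟨1, by omega⟩), by simp [Fin.lt_def]⟩ with he
      have heval : ∀ j (hj : j ∈ S), e j = ⟨(v1, j), hSlt j hj⟩ := by
        intro j hj
        simp only [he, dif_pos (hSlt j hj)]
      have hkey := hindep.measure_inter_preimage_eq_mul (S.image e)
        (sets := fun _ => {1}) (fun i _ => measurableSet_singleton 1)
      have hiInter : (⋂ q ∈ S.image e, (fun ω => X q.1.1 q.1.2 ω) ⁻¹' {1}) =
          ⋂ j ∈ S, X v1 j ⁻¹' {1} := by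
        ext ω
        simp only [Set.mem_iInter, Set.mem_preimage, Set.mem_singleton_iff, Finset.mem_image]
        constructor
        · intro h j hj
          simpa [heval j hj] using h (e j) ⟨j, hj, rfl⟩
        · rintro h q ⟨j, hj, rfl⟩
          simpa [heval j hj] using h j hj
      have hinj : ∀ x ∈ S, ∀ y ∈ S, e x = e y → x = y := by
        intro x hx y hy hxy
        rw [heval x hx, heval y hy] at hxy
        exact congrArg (fun q => (Subtype.val q).2) hxy
      rw [hiInter, Finset.prod_image hinj] at hkey
      rw [hkey]
      have hμj : ∀ j ∈ S, μ ((fun ω => X (e j).1.1 (e j).1.2 ω) ⁻¹' {1}) = ENNReal.ofReal p := by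
        intro j hj
        rw [heval j hj]
        have : ((fun ω => X v1 j ω) ⁻¹' {1} : Set Ω) = {ω | X v1 j ω = 1} := by
          ext ω; simp
        rw [this]
        exact hbern v1 j (ne_of_lt (hSlt j hj))
      rw [Finset.prod_congr rfl hμj, Finset.prod_const]
    rw [hind S, integral_indicator_const (1 : ℝ) (hImeas S), measureReal_def, hμ, smul_eq_mul, mul_one,
      ENNReal.toReal_pow, ENNReal.toReal_ofReal hp0]
  -- expectations of sums
  have hE1 : ∫ ω, ∑ A ∈ E.powersetCard m, ∏ j ∈ A, X v1 j ω ∂μ =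
      (E.powersetCard m).card * p ^ m := by
    rw [integral_finset_sum _ (fun A _ => hInt A)]
    rw [Finset.sum_congr rfl (fun A hA => by
      rw [hExp A (Finset.mem_powersetCard.mp hA).1, (Finset.mem_powersetCard.mp hA).2]),
      Finset.sum_const, nsmul_eq_mul]
  have hE2 : ∫ ω, ∑ B ∈ E.powersetCard l, ∏ j ∈ B, X v1 j ω ∂μ =
      (E.powersetCard l).card * p ^ l := by
    rw [integral_finset_sum _ (fun B _ => hInt B)]
    rw [Finset.sum_congr rfl (fun B hB => by
      rw [hExp B (Finset.mem_powersetCard.mp hB).1, (Finset.mem_powersetCard.mp hB).2]),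
      Finset.sum_const, nsmul_eq_mul]
  -- expectation of product of sums
  have hE3 : ∫ ω, (∑ A ∈ E.powersetCard m, ∏ j ∈ A, X v1 j ω) *
      (∑ B ∈ E.powersetCard l, ∏ j ∈ B, X v1 j ω) ∂μ =
      ∑ A ∈ E.powersetCard m, ∑ B ∈ E.powersetCard l, p ^ (m + l - (A ∩ B).card) := by
    have hptw : ∀ ω, (∑ A ∈ E.powersetCard m, ∏ j ∈ A, X v1 j ω) *
        (∑ B ∈ E.powersetCard l, ∏ j ∈ B, X v1 j ω) =
        ∑ A ∈ E.powersetCard m, ∑ B ∈ E.powersetCard l, ∏ j ∈ A ∪ B, X v1 j ω := by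
      intro ω
      rw [Finset.sum_mul_sum]
      exact Finset.sum_congr rfl fun A _ => Finset.sum_congr rfl fun B _ =>
        prod_mul_prod_union_01 A B _ (fun j => h01 v1 j ω)
    simp_rw [hptw]
    rw [integral_finset_sum _ (fun A _ => integrable_finset_sum _ (fun B _ => hInt (A ∪ B)))]
    refine Finset.sum_congr rfl fun A hA => ?_
    rw [integral_finset_sum _ (fun B _ => hInt (A ∪ B))]
    refine Finset.sum_congr rfl fun B hB => ?_
    obtain ⟨hAE, hAm⟩ := Finset.mem_powersetCard.mp hA
    obtain ⟨hBE, hBl⟩ := Finset.mem_powersetCard.mp hB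
    rw [hExp (A ∪ B) (Finset.union_subset hAE hBE)]
    congr 1
    have := Finset.card_union_add_card_inter A B
    have hABm : (A ∩ B).card ≤ m := hAm ▸ Finset.card_le_card Finset.inter_subset_left
    omega
  rw [hE1, hE2, hE3]
  -- turn product of sums into double sum of constants
  have hconst : ((E.powersetCard m).card * p ^ m) * ((E.powersetCard l).card * p ^ l) =
      ∑ A ∈ E.powersetCard m, ∑ B ∈ E.powersetCard l, p ^ (m + l) := by
    rw [Finset.sum_congr rfl (fun A _ => Finset.sum_const (p ^ (m + l)))]
    rw [Finset.sum_const]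
    simp only [nsmul_eq_mul]
    rw [pow_add]
    ring
  rw [hconst, ← Finset.sum_sub_distrib]
  simp_rw [← Finset.sum_sub_distrib]
  -- fiberwise decomposition
  set g : ℕ → ℝ := fun s => p ^ (m + l - s) - p ^ (m + l) with hg
  have hfiber : ∀ A ∈ E.powersetCard m,
      ∑ B ∈ E.powersetCard l, (p ^ (m + l - (A ∩ B).card) - p ^ (m + l)) =
      ∑ s ∈ Finset.range (l + 1),
        ((m.choose s * (n - 1 - m).choose (l - s) : ℕ) : ℝ) * g s := by
    intro A hA
    obtain ⟨hAE, hAm⟩ := Finset.mem_powersetCard.mp hA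
    have hmaps : ∀ B ∈ E.powersetCard l, (A ∩ B).card ∈ Finset.range (l + 1) := by
      intro B hB
      obtain ⟨hBE, hBl⟩ := Finset.mem_powersetCard.mp hB
      rw [Finset.mem_range]
      have : (A ∩ B).card ≤ B.card := Finset.card_le_card Finset.inter_subset_right
      omega
    rw [← Finset.sum_fiberwise_of_maps_to' hmaps g]
    refine Finset.sum_congr rfl fun s hs => ?_
    rw [Finset.sum_const, nsmul_eq_mul]
    congr 1
    rw [count_inner E A hAE l s (by simpa using Nat.lt_succ_iff.mp (Finset.mem_range.mp hs)),
      hAm, hEcard]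
  rw [Finset.sum_congr rfl hfiber, Finset.sum_const, nsmul_eq_mul, Finset.card_powersetCard,
    hEcard, Finset.mul_sum]
  -- now reduce range sum to Icc sum
  rw [← Finset.sum_subset (s₁ := Finset.Icc (max 1 (m + l + 1 - n)) (min m l))
    (h := fun s hs => by
      rw [Finset.mem_Icc] at hs
      rw [Finset.mem_range]
      omega)]
  · refine Finset.sum_congr rfl fun s hs => ?_
    rw [Finset.mem_Icc] at hs
    have hs1 : 1 ≤ s := le_trans (le_max_left _ _) hs.1
    have hsm : s ≤ m := le_trans hs.2 (min_le_left _ _)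
    have hsl : s ≤ l := le_trans hs.2 (min_le_right _ _)
    have hsn : m + l + 1 - n ≤ s := le_trans (le_max_right _ _) hs.1
    rw [← choose_mul_eq_multinomial (n - 1) m l s hmn hsm hsl (by omega)]
    have hpe : p ^ (m + l - s) * p ^ s = p ^ (m + l) := by
      rw [← pow_add]
      congr 1
      omega
    simp only [hg]
    rw [← hpe]
    push_cast
    ring
  · intro s hsr hsn
    rw [Finset.mem_range] at hsr
    rw [Finset.mem_Icc, not_and_or, not_le, not_le] at hsn
    rcases hsn with hlo | hhi
    · rcases Nat.lt_or_ge s 1 with hs0 | hs1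
      · interval_cases s
        simp [hg]
      · have : n - 1 - m < l - s := by omega
        rw [Nat.choose_eq_zero_of_lt this]
        simp
    · have hsl : s ≤ l := by omega
      have : m < s := by omega
      rw [Nat.choose_eq_zero_of_lt this]
      simp
end

section
/- For any constant c > 0 and any positive integer k, the k x k matrix Σ with entries Σ_{m,l} = c^{m+l-1}/((m-1)!(l-1)!) + sum_{s=1}^{min(m,l)} c^{m+l-s}/(s!(m-s)!(l-s)!) (for 1 <= m, l <= k) has determinant det(Σ) = 2 * c^{k(k+1)/2} * prod_{m=1}^{k} 1/m!. In particular, Σ is nonsingular. -/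
open Finset

private lemma sum_range_shift {M : Type*} [AddCommMonoid M] (f : ℕ → M) (n : ℕ) :
    ∑ t ∈ Finset.range n, f (t + 1) = ∑ s ∈ Finset.Icc 1 n, f s := by
  induction n with
  | zero => simp
  | succ n ih =>
      rw [Finset.sum_range_succ, ih, Finset.sum_Icc_succ_top (by omega)]

private lemma prod_range_shift {M : Type*} [CommMonoid M] (f : ℕ → M) (n : ℕ) :
    ∏ t ∈ Finset.range n, f (t + 1) = ∏ s ∈ Finset.Icc 1 n, f s := by
  induction n with
  | zero => simp
  | succ n ih =>
      rw [Finset.prod_range_succ, ih, Finset.prod_Icc_succ_top (by omega)]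

/-- The limiting covariance matrix of normalized star counts when `np → c`:
its determinant is `2 c^{k(k+1)/2} ∏_{m=1}^k 1/m!`; in particular it is nonsingular.
Row/column `i : Fin k` corresponds to `m = i + 1`. -/
theorem stmt_12 (k : ℕ) (hk : 1 ≤ k) (c : ℝ) (hc : 0 < c)
    (M : Matrix (Fin k) (Fin k) ℝ)
    (hM : ∀ i j : Fin k, M i j =
      c ^ ((i : ℕ) + (j : ℕ) + 1) / (((i : ℕ).factorial : ℝ) * ((j : ℕ).factorial : ℝ)) +
        ∑ s ∈ Finset.Icc 1 (min ((i : ℕ) + 1) ((j : ℕ) + 1)),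
          c ^ ((i : ℕ) + 1 + ((j : ℕ) + 1) - s) /
            ((s.factorial : ℝ) * (((i : ℕ) + 1 - s).factorial : ℝ) *
              (((j : ℕ) + 1 - s).factorial : ℝ))) :
    M.det = 2 * c ^ (k * (k + 1) / 2) * ∏ m ∈ Finset.Icc 1 k, (1 / (m.factorial : ℝ)) ∧
      M.det ≠ 0 := by
  classical
  -- lower triangular factor
  set B : Matrix (Fin k) (Fin k) ℝ := fun i t =>
    if (t : ℕ) ≤ (i : ℕ) then c ^ ((i : ℕ) - (t : ℕ)) / (((i : ℕ) - (t : ℕ)).factorial : ℝ)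
    else 0 with hB
  set D : Fin k → ℝ := fun t =>
    (if (t : ℕ) = 0 then 2 else 1) * (c ^ ((t : ℕ) + 1) / ((((t : ℕ) + 1).factorial : ℝ)))
    with hD
  have hfact : M = B * Matrix.diagonal D * B.transpose := by
    ext i j
    have hik : (i : ℕ) < k := i.isLt
    have hjk : (j : ℕ) < k := j.isLt
    rw [hM i j, Matrix.mul_apply]
    simp only [Matrix.mul_diagonal, Matrix.transpose_apply]
    set G : ℕ → ℝ := fun t => if t ≤ min (i : ℕ) (j : ℕ) then
        (c ^ ((i : ℕ) - t) / (((i : ℕ) - t).factorial : ℝ)) *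
          ((if t = 0 then (2:ℝ) else 1) * (c ^ (t + 1) / (((t + 1).factorial : ℝ)))) *
          (c ^ ((j : ℕ) - t) / (((j : ℕ) - t).factorial : ℝ)) else 0 with hG
    have hg : ∀ t : Fin k, B i t * D t * B j t = G (t : ℕ) := by
      intro t
      simp only [hB, hD, hG]
      by_cases h : (t : ℕ) ≤ min (i : ℕ) (j : ℕ)
      · rw [if_pos h, if_pos (le_trans h (min_le_left _ _)),
          if_pos (le_trans h (min_le_right _ _))]
      · rw [if_neg h]
        rcases (show ¬((t : ℕ) ≤ (i : ℕ)) ∨ ¬((t : ℕ) ≤ (j : ℕ)) by omega) with h' | h'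
        · rw [if_neg h']; ring
        · rw [if_neg h']; ring
    rw [Finset.sum_congr rfl (fun t _ => hg t), Fin.sum_univ_eq_sum_range G k]
    rw [← Finset.sum_subset (Finset.range_subset_range.2
        (show min (i : ℕ) (j : ℕ) + 1 ≤ k by omega))
        (fun t _ ht => by
          simp only [Finset.mem_range] at ht
          simp only [hG]
          rw [if_neg (by omega)])]
    have hfi : (((i : ℕ)).factorial : ℝ) ≠ 0 := Nat.cast_ne_zero.2 (Nat.factorial_ne_zero _)
    have hfj : (((j : ℕ)).factorial : ℝ) ≠ 0 := Nat.cast_ne_zero.2 (Nat.factorial_ne_zero _)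
    have key : ∀ t ∈ Finset.range (min (i : ℕ) (j : ℕ) + 1), G t =
        (fun s => c ^ ((i : ℕ) + 1 + ((j : ℕ) + 1) - s) /
            ((s.factorial : ℝ) * (((i : ℕ) + 1 - s).factorial : ℝ) *
              (((j : ℕ) + 1 - s).factorial : ℝ))) (t + 1) +
        (if t = 0 then c ^ ((i : ℕ) + (j : ℕ) + 1) /
            (((i : ℕ).factorial : ℝ) * ((j : ℕ).factorial : ℝ)) else 0) := by
      intro t ht
      simp only [Finset.mem_range] at ht
      have hti : t ≤ (i : ℕ) := by omega
      have htj : t ≤ (j : ℕ) := by omega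
      simp only [hG]
      rw [if_pos (by omega)]
      have e1 : (i : ℕ) + 1 + ((j : ℕ) + 1) - (t + 1)
          = ((i : ℕ) - t) + ((t + 1) + ((j : ℕ) - t)) := by omega
      have e2 : (i : ℕ) + 1 - (t + 1) = (i : ℕ) - t := by omega
      have e3 : (j : ℕ) + 1 - (t + 1) = (j : ℕ) - t := by omega
      have hft : (((t + 1).factorial : ℝ)) ≠ 0 := Nat.cast_ne_zero.2 (Nat.factorial_ne_zero _)
      have hfit : ((((i : ℕ) - t).factorial : ℝ)) ≠ 0 := Nat.cast_ne_zero.2 (Nat.factorial_ne_zero _)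
      have hfjt : ((((j : ℕ) - t).factorial : ℝ)) ≠ 0 := Nat.cast_ne_zero.2 (Nat.factorial_ne_zero _)
      rcases Nat.eq_zero_or_pos t with rfl | ht0
      · simp only [if_pos rfl, Nat.sub_zero] at *
        rw [e1, pow_add, pow_add,
          show c ^ ((i : ℕ) + (j : ℕ) + 1) = c ^ (i : ℕ) * (c ^ (0 + 1) * c ^ (j : ℕ)) by
            rw [← pow_add, ← pow_add]; congr 1; omega]
        simp only [↓reduceIte, zero_add, Nat.add_sub_cancel]
        field_simp
        ring
      · rw [if_neg (by omega), if_neg (by omega), e1, e2, e3, pow_add, pow_add]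
        field_simp
        ring
    rw [Finset.sum_congr rfl key, Finset.sum_add_distrib]
    rw [Finset.sum_ite_eq' (Finset.range (min (i : ℕ) (j : ℕ) + 1)) 0
      (fun _ => c ^ ((i : ℕ) + (j : ℕ) + 1) /
            (((i : ℕ).factorial : ℝ) * ((j : ℕ).factorial : ℝ)))]
    rw [if_pos (Finset.mem_range.2 (by omega))]
    rw [show min ((i : ℕ) + 1) ((j : ℕ) + 1) = min (i : ℕ) (j : ℕ) + 1 by omega,
      ← sum_range_shift (fun s => c ^ ((i : ℕ) + 1 + ((j : ℕ) + 1) - s) /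
            ((s.factorial : ℝ) * (((i : ℕ) + 1 - s).factorial : ℝ) *
              (((j : ℕ) + 1 - s).factorial : ℝ))) (min (i : ℕ) (j : ℕ) + 1)]
    ring
  have hBdet : B.det = 1 := by
    have htri : B.BlockTriangular (OrderDual.toDual) := by
      intro i j hij
      simp only [hB]
      rw [if_neg]
      exact fun h => absurd h (by exact Nat.not_le.2 hij)
    rw [Matrix.det_of_lowerTriangular B htri]
    have : ∀ i : Fin k, B i i = 1 := by
      intro i; simp [hB]
    simp [this]
  have hDdet : (Matrix.diagonal D).det = 2 * c ^ (k * (k + 1) / 2) *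
      ∏ m ∈ Finset.Icc 1 k, (1 / (m.factorial : ℝ)) := by
    rw [Matrix.det_diagonal]
    rw [Fin.prod_univ_eq_prod_range (fun t =>
      (if t = 0 then (2:ℝ) else 1) * (c ^ (t + 1) / (((t + 1).factorial : ℝ)))) k]
    rw [Finset.prod_mul_distrib]
    have h1 : ∏ t ∈ Finset.range k, (if t = 0 then (2:ℝ) else 1) = 2 := by
      rw [Finset.prod_eq_single_of_mem 0 (Finset.mem_range.2 (by omega))]
      · simp
      · intro b _ hb; simp [hb]
    have h2 : ∏ t ∈ Finset.range k, (c ^ (t + 1) / (((t + 1).factorial : ℝ)))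
        = c ^ (k * (k + 1) / 2) * ∏ m ∈ Finset.Icc 1 k, (1 / (m.factorial : ℝ)) := by
      rw [show (fun t => c ^ (t + 1) / (((t + 1).factorial : ℝ))) = fun t =>
        c ^ (t + 1) * (1 / (((t + 1).factorial : ℝ))) from by funext t; ring]
      rw [Finset.prod_mul_distrib, Finset.prod_pow_eq_pow_sum]
      congr 1
      · congr 1
        have h := Finset.sum_range_succ' (fun t => t) k
        simp only [add_zero] at h
        rw [← h, Finset.sum_range_id]
        simp [Nat.mul_comm]
      · exact prod_range_shift (fun m => 1 / (m.factorial : ℝ)) k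
    rw [h1, h2]; ring
  have hdet : M.det = 2 * c ^ (k * (k + 1) / 2) *
      ∏ m ∈ Finset.Icc 1 k, (1 / (m.factorial : ℝ)) := by
    rw [hfact, Matrix.det_mul, Matrix.det_mul, Matrix.det_transpose, hBdet, hDdet]
    ring
  refine ⟨hdet, ?_⟩
  rw [hdet]
  have hprod : 0 < ∏ m ∈ Finset.Icc 1 k, (1 / (m.factorial : ℝ)) :=
    Finset.prod_pos (fun m _ => by positivity)
  positivity
end

section
/- For the Erdős–Rényi random graph G(n,p) with fixed m >= 1, as n -> infinity with np -> c for a constant c > 0, the variance of the number of (m+1)-stars satisfies Var[S_{m+1,n}] / n -> c^{2m-1}/((m-1)!)^2 + sum_{s=1}^{m} c^{2m-s}/(s! ((m-s)!)^2). -/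
open MeasureTheory ProbabilityTheory Finset Filter

section Aux

/-- Integral of a finite product of independent random variables. -/
lemma integral_finset_prod_indep {Ω ι : Type*} [MeasurableSpace Ω] {μ : Measure Ω}
    [IsProbabilityMeasure μ]
    {f : ι → Ω → ℝ} (hindep : iIndepFun f μ)
    (hmeas : ∀ i, Measurable (f i)) (s : Finset ι) :
    ∫ ω, ∏ i ∈ s, f i ω ∂μ = ∏ i ∈ s, ∫ ω, f i ω ∂μ := by
  classical
  induction s using Finset.cons_induction with
  | empty => simp
  | cons i s hi ih =>
    have key : (∏ j ∈ s, f j) = fun ω => ∏ j ∈ s, f j ω := by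
      funext ω; simp [Finset.prod_apply]
    have h1 : IndepFun (f i) (∏ j ∈ s, f j) μ :=
      (hindep.indepFun_finset_prod_of_notMem hmeas hi).symm
    have hpm : AEStronglyMeasurable (∏ j ∈ s, f j) μ := by
      rw [key]
      exact (Finset.measurable_prod s (fun j (_ : j ∈ s) => hmeas j)).aestronglyMeasurable
    have h2 := h1.integral_mul_eq_mul_integral (hmeas i).aestronglyMeasurable hpm
    rw [key] at h2
    have hmul : (f i * fun ω => ∏ j ∈ s, f j ω) = fun ω => f i ω * ∏ j ∈ s, f j ω := rfl
    rw [hmul] at h2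
    calc ∫ ω, ∏ x ∈ Finset.cons i s hi, f x ω ∂μ
        = ∫ ω, f i ω * ∏ j ∈ s, f j ω ∂μ := by
          congr 1; funext ω; rw [Finset.prod_cons]
      _ = (∫ ω, f i ω ∂μ) * ∫ ω, ∏ j ∈ s, f j ω ∂μ := h2
      _ = ∏ x ∈ Finset.cons i s hi, ∫ ω, f x ω ∂μ := by rw [ih, Finset.prod_cons]

/-- Product over a union for `{0,1}`-valued functions. -/
lemma prod01_union {ι : Type*} [DecidableEq ι] {f : ι → ℝ} (h : ∀ i, f i = 0 ∨ f i = 1)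
    (s t : Finset ι) :
    (∏ i ∈ s, f i) * ∏ i ∈ t, f i = ∏ i ∈ s ∪ t, f i := by
  by_cases hz : ∃ i ∈ s ∩ t, f i = 0
  · obtain ⟨i, hi, hfi⟩ := hz
    rw [Finset.mem_inter] at hi
    rw [Finset.prod_eq_zero hi.1 hfi, Finset.prod_eq_zero (Finset.mem_union_left _ hi.1) hfi,
      zero_mul]
  · push_neg at hz
    have h1 : ∏ i ∈ s ∩ t, f i = 1 := Finset.prod_eq_one fun i hi => by
      rcases h i with h0 | h1
      · exact absurd h0 (hz i hi)
      · exact h1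
    have := Finset.prod_union_inter (s₁ := s) (s₂ := t) (f := f)
    rw [h1, mul_one] at this
    exact this.symm

/-- A `{0,1}`-valued measurable function integrates to the measure of its one-set. -/
lemma integral_of_01 {Ω : Type*} [MeasurableSpace Ω] {μ : Measure Ω}
    {f : Ω → ℝ} (hf : Measurable f) (h01 : ∀ ω, f ω = 0 ∨ f ω = 1) :
    ∫ ω, f ω ∂μ = (μ {ω | f ω = 1}).toReal := by
  have hset : MeasurableSet {ω | f ω = 1} := hf (measurableSet_singleton 1)
  have heq : f = Set.indicator {ω | f ω = 1} (fun _ => (1 : ℝ)) := by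
    funext ω
    rcases h01 ω with h0 | h1
    · rw [h0, Set.indicator_apply]
      have : ω ∉ {ω | f ω = 1} := by simp [Set.mem_setOf_eq, h0]
      simp [this]
    · rw [h1, Set.indicator_apply]
      simp [Set.mem_setOf_eq, h1]
  rw [heq]
  rw [MeasureTheory.integral_indicator_const (1 : ℝ) hset]
  simp
  rfl

end Aux
section Edge
variable {n : ℕ}

/-- The sorted edge corresponding to an unordered pair `{i, j}` with `i ≠ j`. -/
def edge (i j : Fin n) (h : i ≠ j) : {q : Fin n × Fin n // q.1 < q.2} :=
  if hlt : i < j then ⟨(i, j), hlt⟩ else ⟨(j, i), lt_of_le_of_ne (not_lt.mp hlt) h.symm⟩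

lemma edge_cases (i j : Fin n) (h : i ≠ j) :
    ((edge i j h).1 = (i, j) ∧ i < j) ∨ ((edge i j h).1 = (j, i) ∧ j < i) := by
  unfold edge; split_ifs with hlt
  · exact Or.inl ⟨rfl, hlt⟩
  · exact Or.inr ⟨rfl, lt_of_le_of_ne (not_lt.mp hlt) h.symm⟩

lemma edge_inj {i a b : Fin n} (ha : i ≠ a) (hb : i ≠ b)
    (h : edge i a ha = edge i b hb) : a = b := by
  have hh : (edge i a ha).1 = (edge i b hb).1 := by rw [h]
  rcases edge_cases i a ha with ⟨h1, hl1⟩ | ⟨h1, hl1⟩ <;>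
    rcases edge_cases i b hb with ⟨h2, hl2⟩ | ⟨h2, hl2⟩ <;>
      rw [h1, h2] at hh <;> simp only [Prod.mk.injEq] at hh <;>
        first
          | exact hh
          | exact hh.1
          | exact hh.2
          | exact absurd hh.2.symm ha
          | exact absurd hh.1.symm ha

/-- The set of edges of the star centered at `i` with leaves `A`. -/
def edgesOf (i : Fin n) (A : Finset (Fin n)) (hA : i ∉ A) :
    Finset {q : Fin n × Fin n // q.1 < q.2} :=
  A.attach.image (fun j => edge i j.1 (by rintro rfl; exact hA j.2))

lemma mem_edgesOf {i : Fin n} {A : Finset (Fin n)} {hA : i ∉ A}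
    {q : {q : Fin n × Fin n // q.1 < q.2}} :
    q ∈ edgesOf i A hA ↔ (q.1.1 = i ∧ q.1.2 ∈ A) ∨ (q.1.2 = i ∧ q.1.1 ∈ A) := by
  constructor
  · intro hq
    rw [edgesOf, Finset.mem_image] at hq
    obtain ⟨j, -, rfl⟩ := hq
    rcases edge_cases i j.1 _ with ⟨h1, -⟩ | ⟨h1, -⟩
    · left; rw [h1]; exact ⟨rfl, j.2⟩
    · right; rw [h1]; exact ⟨rfl, j.2⟩
  · rintro (⟨h1, h2⟩ | ⟨h1, h2⟩)
    · rw [edgesOf, Finset.mem_image]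
      refine ⟨⟨q.1.2, h2⟩, Finset.mem_attach _ _, ?_⟩
      have hlt : i < q.1.2 := h1 ▸ q.2
      unfold edge; rw [dif_pos hlt]
      exact Subtype.ext (Prod.ext h1.symm rfl)
    · rw [edgesOf, Finset.mem_image]
      refine ⟨⟨q.1.1, h2⟩, Finset.mem_attach _ _, ?_⟩
      have hlt : q.1.1 < i := h1 ▸ q.2
      unfold edge; rw [dif_neg (not_lt.mpr hlt.le)]
      exact Subtype.ext (Prod.ext rfl h1.symm)

lemma card_edgesOf (i : Fin n) (A : Finset (Fin n)) (hA : i ∉ A) :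
    (edgesOf i A hA).card = A.card := by
  rw [edgesOf, Finset.card_image_of_injOn, Finset.card_attach]
  intro a _ b _ hab
  exact Subtype.ext (edge_inj _ _ hab)

lemma edgesOf_inter_same (i : Fin n) (A A' : Finset (Fin n)) (hA : i ∉ A) (hA' : i ∉ A') :
    edgesOf i A hA ∩ edgesOf i A' hA' =
      edgesOf i (A ∩ A') (fun h => hA (Finset.mem_inter.mp h).1) := by
  ext q
  have hne : q.1.1 ≠ q.1.2 := ne_of_lt q.2
  have haux : ¬(q.1.1 = i ∧ q.1.2 = i) := fun ⟨u, v⟩ => hne (u.trans v.symm)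
  simp only [Finset.mem_inter, mem_edgesOf]
  tauto

lemma edgesOf_inter_ne (i i' : Fin n) (hii' : i ≠ i') (A A' : Finset (Fin n))
    (hA : i ∉ A) (hA' : i' ∉ A') :
    edgesOf i A hA ∩ edgesOf i' A' hA' =
      if i' ∈ A ∧ i ∈ A' then {edge i i' hii'} else ∅ := by
  ext q
  have hne : q.1.1 ≠ q.1.2 := ne_of_lt q.2
  simp only [Finset.mem_inter, mem_edgesOf]
  constructor
  · rintro ⟨⟨h1, h2⟩ | ⟨h1, h2⟩, ⟨h3, h4⟩ | ⟨h3, h4⟩⟩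
    · exact absurd (h1.symm.trans h3) hii'
    · have hq : q.1 = (i, i') := Prod.ext h1 h3
      have hc : i' ∈ A ∧ i ∈ A' := ⟨h3 ▸ h2, h1 ▸ h4⟩
      rw [if_pos hc, Finset.mem_singleton]
      have hlt : i < i' := by rw [← h1, ← h3]; exact q.2
      unfold edge; rw [dif_pos hlt]
      exact Subtype.ext hq
    · have hq : q.1 = (i', i) := Prod.ext h3 h1
      have hc : i' ∈ A ∧ i ∈ A' := ⟨h3 ▸ h2, h1 ▸ h4⟩
      rw [if_pos hc, Finset.mem_singleton]
      have hlt : i' < i := by rw [← h1, ← h3]; exact q.2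
      unfold edge; rw [dif_neg (not_lt.mpr hlt.le)]
      exact Subtype.ext hq
    · exact absurd (h1.symm.trans h3) hii'
  · intro hq
    by_cases hc : i' ∈ A ∧ i ∈ A'
    · rw [if_pos hc, Finset.mem_singleton] at hq
      subst hq
      rcases edge_cases i i' hii' with ⟨h1, -⟩ | ⟨h1, -⟩ <;> rw [h1]
      · exact ⟨Or.inl ⟨rfl, hc.1⟩, Or.inr ⟨rfl, hc.2⟩⟩
      · exact ⟨Or.inr ⟨rfl, hc.1⟩, Or.inl ⟨rfl, hc.2⟩⟩
    · rw [if_neg hc] at hq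
      exact absurd hq (Finset.notMem_empty _)

end Edge
section Counting
variable {α : Type*} [DecidableEq α]

lemma card_powersetCard_filter_inter (U A : Finset α) (hA : A ⊆ U) {m : ℕ} (hAcard : A.card = m)
    {s : ℕ} (hs : s ≤ m) :
    ((U.powersetCard m).filter (fun B => (A ∩ B).card = s)).card
      = m.choose s * (U.card - m).choose (m - s) := by
  have key : ((U.powersetCard m).filter (fun B => (A ∩ B).card = s)).card
      = ((A.powersetCard s) ×ˢ ((U \ A).powersetCard (m - s))).card := by
    refine Finset.card_bij' (fun B _ => (A ∩ B, B \ A)) (fun P _ => P.1 ∪ P.2)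
      ?_ ?_ ?_ ?_
    · intro B hB
      rw [Finset.mem_filter, Finset.mem_powersetCard] at hB
      obtain ⟨⟨hBU, hBm⟩, hABs⟩ := hB
      rw [Finset.mem_product]
      dsimp only
      rw [Finset.mem_powersetCard, Finset.mem_powersetCard]
      refine ⟨⟨Finset.inter_subset_left, hABs⟩, Finset.sdiff_subset_sdiff hBU le_rfl, ?_⟩
      have h1 : (B \ A).card + (B ∩ A).card = B.card := Finset.card_sdiff_add_card_inter B A
      rw [Finset.inter_comm] at hABs
      omega
    · intro P hP
      rw [Finset.mem_product, Finset.mem_powersetCard, Finset.mem_powersetCard] at hP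
      obtain ⟨⟨hP1, hP1c⟩, hP2, hP2c⟩ := hP
      have hdisj : Disjoint P.1 P.2 := (Finset.disjoint_sdiff).mono hP1 hP2
      have e1 : A ∩ (P.1 ∪ P.2) = P.1 := by
        rw [Finset.inter_union_distrib_left, Finset.inter_eq_right.mpr hP1,
          Finset.disjoint_iff_inter_eq_empty.mp ((Finset.disjoint_sdiff).mono_right hP2),
          Finset.union_empty]
      rw [Finset.mem_filter, Finset.mem_powersetCard]
      refine ⟨⟨Finset.union_subset (hP1.trans hA) (hP2.trans (Finset.sdiff_subset)), ?_⟩, ?_⟩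
      · rw [Finset.card_union_of_disjoint hdisj, hP1c, hP2c]; omega
      · rw [e1, hP1c]
    · intro B hB
      dsimp only
      rw [Finset.inter_comm, Finset.union_comm, Finset.sdiff_union_inter]
    · intro P hP
      rw [Finset.mem_product, Finset.mem_powersetCard, Finset.mem_powersetCard] at hP
      obtain ⟨⟨hP1, hP1c⟩, hP2, hP2c⟩ := hP
      have e1 : A ∩ (P.1 ∪ P.2) = P.1 := by
        rw [Finset.inter_union_distrib_left, Finset.inter_eq_right.mpr hP1,
          Finset.disjoint_iff_inter_eq_empty.mp ((Finset.disjoint_sdiff).mono_right hP2),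
          Finset.union_empty]
      have e2 : (P.1 ∪ P.2) \ A = P.2 := by
        rw [Finset.union_sdiff_distrib, Finset.sdiff_eq_empty_iff_subset.mpr hP1,
          Finset.sdiff_eq_self_of_disjoint ((Finset.sdiff_disjoint).mono_left hP2),
          Finset.empty_union]
      rw [e1, e2]
  rw [key, Finset.card_product, Finset.card_powersetCard, Finset.card_powersetCard,
    Finset.card_sdiff_of_subset hA, hAcard]

lemma card_powersetCard_filter_mem (U : Finset α) {x : α} (hx : x ∈ U) {m : ℕ} (hm : 1 ≤ m) :
    ((U.powersetCard m).filter (fun A => x ∈ A)).card = (U.card - 1).choose (m - 1) := by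
  have key : ((U.powersetCard m).filter (fun A => x ∈ A)).card
      = ((U.erase x).powersetCard (m - 1)).card := by
    refine Finset.card_bij' (fun A _ => A.erase x) (fun B _ => insert x B) ?_ ?_ ?_ ?_
    · intro A hA
      rw [Finset.mem_filter, Finset.mem_powersetCard] at hA
      obtain ⟨⟨hAU, hAm⟩, hxA⟩ := hA
      rw [Finset.mem_powersetCard]
      exact ⟨Finset.erase_subset_erase _ hAU, by rw [Finset.card_erase_of_mem hxA, hAm]⟩
    · intro B hB
      rw [Finset.mem_powersetCard] at hB
      obtain ⟨hBU, hBc⟩ := hB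
      have hxB : x ∉ B := fun h => (Finset.mem_erase.mp (hBU h)).1 rfl
      rw [Finset.mem_filter, Finset.mem_powersetCard]
      refine ⟨⟨Finset.insert_subset hx (hBU.trans (Finset.erase_subset _ _)), ?_⟩,
        Finset.mem_insert_self _ _⟩
      rw [Finset.card_insert_of_notMem hxB, hBc]; omega
    · intro A hA
      rw [Finset.mem_filter] at hA
      exact Finset.insert_erase hA.2
    · intro B hB
      rw [Finset.mem_powersetCard] at hB
      have hxB : x ∉ B := fun h => (Finset.mem_erase.mp (hB.1 h)).1 rfl
      exact Finset.erase_insert hxB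
  rw [key, Finset.card_powersetCard, Finset.card_erase_of_mem hx]

end Counting
/-- The number of `(m+1)`-stars in a graph on `Fin n` with edge indicators `X`. -/
def starCount (n m : ℕ) {Ω : Type*} (X : Fin n → Fin n → Ω → ℝ) (ω : Ω) : ℝ :=
  ∑ i, ∑ A ∈ (Finset.univ.erase i).powersetCard m, ∏ j ∈ A, X i j ω

section Moments

variable {n : ℕ} {Ω : Type*} [MeasurableSpace Ω] {μ : Measure Ω} [IsProbabilityMeasure μ]
  {X : Fin n → Fin n → Ω → ℝ} {pp : ℝ}

lemma integrable_of_01 {g : Ω → ℝ} (hg : Measurable g) (h : ∀ ω, g ω = 0 ∨ g ω = 1) :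
    Integrable g μ := by
  refine Integrable.mono' (integrable_const (1 : ℝ)) hg.aestronglyMeasurable ?_
  filter_upwards with ω
  rcases h ω with h0 | h0 <;> simp [h0]

lemma integral_prod_edges
    (hmeas : ∀ i j, Measurable (X i j))
    (h01 : ∀ i j ω, X i j ω = 0 ∨ X i j ω = 1)
    (hbern : ∀ i j, i ≠ j → μ {ω | X i j ω = 1} = ENNReal.ofReal pp)
    (hpp0 : 0 ≤ pp)
    (hindep : iIndepFun
      (fun (q : {q : Fin n × Fin n // q.1 < q.2}) ω => X q.1.1 q.1.2 ω) μ)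
    (E : Finset {q : Fin n × Fin n // q.1 < q.2}) :
    ∫ ω, ∏ q ∈ E, X q.1.1 q.1.2 ω ∂μ = pp ^ E.card := by
  rw [integral_finset_prod_indep hindep (fun q => hmeas _ _) E]
  have h1 : ∀ q : {q : Fin n × Fin n // q.1 < q.2},
      ∫ ω, X q.1.1 q.1.2 ω ∂μ = pp := by
    intro q
    rw [integral_of_01 (hmeas _ _) (h01 _ _), hbern _ _ (ne_of_lt q.2),
      ENNReal.toReal_ofReal hpp0]
  rw [Finset.prod_congr rfl (fun q _ => h1 q), Finset.prod_const]

lemma prod_X_eq_edges (hsym : ∀ i j, X i j = X j i)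
    (i : Fin n) (A : Finset (Fin n)) (hA : i ∉ A) (ω : Ω) :
    ∏ j ∈ A, X i j ω = ∏ q ∈ edgesOf i A hA, X q.1.1 q.1.2 ω := by
  rw [edgesOf, Finset.prod_image]
  · rw [← Finset.prod_attach A (fun j => X i j ω)]
    refine Finset.prod_congr rfl (fun j _ => ?_)
    rcases edge_cases i j.1 _ with ⟨h1, -⟩ | ⟨h1, -⟩ <;> rw [h1]
    rw [hsym]
  · intro a _ b _ hab
    exact Subtype.ext (edge_inj _ _ hab)

lemma integral_prod_prod
    (hmeas : ∀ i j, Measurable (X i j))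
    (hsym : ∀ i j, X i j = X j i)
    (h01 : ∀ i j ω, X i j ω = 0 ∨ X i j ω = 1)
    (hbern : ∀ i j, i ≠ j → μ {ω | X i j ω = 1} = ENNReal.ofReal pp)
    (hpp0 : 0 ≤ pp)
    (hindep : iIndepFun
      (fun (q : {q : Fin n × Fin n // q.1 < q.2}) ω => X q.1.1 q.1.2 ω) μ)
    (i i' : Fin n) (A A' : Finset (Fin n)) (hA : i ∉ A) (hA' : i' ∉ A') :
    ∫ ω, (∏ j ∈ A, X i j ω) * ∏ j ∈ A', X i' j ω ∂μ
      = pp ^ ((edgesOf i A hA) ∪ (edgesOf i' A' hA')).card := by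
  have h1 : ∀ ω, (∏ j ∈ A, X i j ω) * ∏ j ∈ A', X i' j ω
      = ∏ q ∈ (edgesOf i A hA) ∪ (edgesOf i' A' hA'), X q.1.1 q.1.2 ω := by
    intro ω
    rw [prod_X_eq_edges hsym i A hA ω, prod_X_eq_edges hsym i' A' hA' ω]
    exact prod01_union (fun q => h01 _ _ ω) _ _
  simp_rw [h1]
  exact integral_prod_edges hmeas h01 hbern hpp0 hindep _

end Moments
section Moments2

variable {n mm : ℕ} {Ω : Type*} [MeasurableSpace Ω] {μ : Measure Ω} [IsProbabilityMeasure μ]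
  {X : Fin n → Fin n → Ω → ℝ} {pp : ℝ}

lemma mem_P {i : Fin n} {A : Finset (Fin n)}
    (hA : A ∈ (Finset.univ.erase i).powersetCard mm) : i ∉ A ∧ A.card = mm := by
  rw [Finset.mem_powersetCard] at hA
  exact ⟨fun h => (Finset.mem_erase.mp (hA.1 h)).1 rfl, hA.2⟩

lemma card_erase_univ (i : Fin n) : (Finset.univ.erase i).card = n - 1 := by
  rw [Finset.card_erase_of_mem (Finset.mem_univ i), Finset.card_univ, Fintype.card_fin]

lemma prod01 {ι : Type*} {s : Finset ι} {f : ι → ℝ} (h : ∀ j ∈ s, f j = 0 ∨ f j = 1) :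
    (∏ j ∈ s, f j) = 0 ∨ (∏ j ∈ s, f j) = 1 := by
  by_cases hz : ∃ j ∈ s, f j = 0
  · obtain ⟨j, hj, hfj⟩ := hz
    exact Or.inl (Finset.prod_eq_zero hj hfj)
  · push_neg at hz
    exact Or.inr (Finset.prod_eq_one fun j hj => (h j hj).resolve_left (hz j hj))

lemma integrable_prod_prod (hmeas : ∀ i j, Measurable (X i j))
    (h01 : ∀ i j ω, X i j ω = 0 ∨ X i j ω = 1)
    (i i' : Fin n) (A A' : Finset (Fin n)) :
    Integrable (fun ω => (∏ j ∈ A, X i j ω) * ∏ j ∈ A', X i' j ω) μ := by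
  apply integrable_of_01
  · exact (Finset.measurable_prod A fun j _ => hmeas i j).mul
      (Finset.measurable_prod A' fun j _ => hmeas i' j)
  · intro ω
    rcases prod01 (s := A) (f := fun j => X i j ω) (fun j _ => h01 i j ω) with h | h <;>
      rcases prod01 (s := A') (f := fun j => X i' j ω) (fun j _ => h01 i' j ω) with h' | h' <;>
        simp [h, h']

lemma integral_pair_diag
    (hmeas : ∀ i j, Measurable (X i j)) (hsym : ∀ i j, X i j = X j i)
    (h01 : ∀ i j ω, X i j ω = 0 ∨ X i j ω = 1)
    (hbern : ∀ i j, i ≠ j → μ {ω | X i j ω = 1} = ENNReal.ofReal pp) (hpp0 : 0 ≤ pp)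
    (hindep : iIndepFun
      (fun (q : {q : Fin n × Fin n // q.1 < q.2}) ω => X q.1.1 q.1.2 ω) μ)
    (i : Fin n) (A A' : Finset (Fin n)) (hiA : i ∉ A) (hiA' : i ∉ A')
    (hAc : A.card = mm) (hA'c : A'.card = mm) :
    ∫ ω, (∏ j ∈ A, X i j ω) * ∏ j ∈ A', X i j ω ∂μ = pp ^ (2 * mm - (A ∩ A').card) := by
  rw [integral_prod_prod hmeas hsym h01 hbern hpp0 hindep i i A A' hiA hiA']
  congr 1
  have h1 := Finset.card_union_add_card_inter (edgesOf i A hiA) (edgesOf i A' hiA')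
  rw [edgesOf_inter_same i A A' hiA hiA', card_edgesOf, card_edgesOf, card_edgesOf,
    hAc, hA'c] at h1
  have h2 : (A ∩ A').card ≤ mm := hAc ▸ Finset.card_le_card Finset.inter_subset_left
  omega

lemma integral_pair_off
    (hmeas : ∀ i j, Measurable (X i j)) (hsym : ∀ i j, X i j = X j i)
    (h01 : ∀ i j ω, X i j ω = 0 ∨ X i j ω = 1)
    (hbern : ∀ i j, i ≠ j → μ {ω | X i j ω = 1} = ENNReal.ofReal pp) (hpp0 : 0 ≤ pp)
    (hindep : iIndepFun
      (fun (q : {q : Fin n × Fin n // q.1 < q.2}) ω => X q.1.1 q.1.2 ω) μ)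
    (i i' : Fin n) (hii' : i ≠ i') (A A' : Finset (Fin n)) (hiA : i ∉ A) (hi'A' : i' ∉ A')
    (hAc : A.card = mm) (hA'c : A'.card = mm) :
    ∫ ω, (∏ j ∈ A, X i j ω) * ∏ j ∈ A', X i' j ω ∂μ
      = if i' ∈ A ∧ i ∈ A' then pp ^ (2 * mm - 1) else pp ^ (2 * mm) := by
  rw [integral_prod_prod hmeas hsym h01 hbern hpp0 hindep i i' A A' hiA hi'A']
  have h1 := Finset.card_union_add_card_inter (edgesOf i A hiA) (edgesOf i' A' hi'A')
  rw [edgesOf_inter_ne i i' hii' A A' hiA hi'A', card_edgesOf, card_edgesOf, hAc, hA'c] at h1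
  by_cases hc : i' ∈ A ∧ i ∈ A'
  · rw [if_pos hc] at h1 ⊢
    rw [Finset.card_singleton] at h1
    have hmm : 1 ≤ mm := hAc ▸ Finset.card_pos.mpr ⟨i', hc.1⟩
    congr 1
    omega
  · rw [if_neg hc] at h1 ⊢
    rw [Finset.card_empty] at h1
    congr 1
    omega

end Moments2
section Moments3

variable {n mm : ℕ} {Ω : Type*} [MeasurableSpace Ω] {μ : Measure Ω} [IsProbabilityMeasure μ]
  {X : Fin n → Fin n → Ω → ℝ} {pp : ℝ}

lemma integral_starCount
    (hmeas : ∀ i j, Measurable (X i j)) (hsym : ∀ i j, X i j = X j i)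
    (h01 : ∀ i j ω, X i j ω = 0 ∨ X i j ω = 1)
    (hbern : ∀ i j, i ≠ j → μ {ω | X i j ω = 1} = ENNReal.ofReal pp) (hpp0 : 0 ≤ pp)
    (hindep : iIndepFun
      (fun (q : {q : Fin n × Fin n // q.1 < q.2}) ω => X q.1.1 q.1.2 ω) μ) :
    ∫ ω, starCount n mm X ω ∂μ = (n : ℝ) * ((n - 1).choose mm : ℝ) * pp ^ mm := by
  have hint : ∀ (i : Fin n) (A : Finset (Fin n)),
      Integrable (fun ω => ∏ j ∈ A, X i j ω) μ := by
    intro i A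
    apply integrable_of_01 (Finset.measurable_prod A fun j _ => hmeas i j)
    intro ω
    exact prod01 (fun j _ => h01 i j ω)
  unfold starCount
  rw [MeasureTheory.integral_finset_sum _
    (fun i _ => integrable_finset_sum _ (fun A _ => hint i A))]
  have h1 : ∀ i : Fin n, ∫ ω, ∑ A ∈ (Finset.univ.erase i).powersetCard mm, ∏ j ∈ A, X i j ω ∂μ
      = ((n - 1).choose mm : ℝ) * pp ^ mm := by
    intro i
    rw [MeasureTheory.integral_finset_sum _ (fun A _ => hint i A)]
    have h2 : ∀ A ∈ (Finset.univ.erase i).powersetCard mm,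
        ∫ ω, ∏ j ∈ A, X i j ω ∂μ = pp ^ mm := by
      intro A hA
      obtain ⟨hiA, hAc⟩ := mem_P hA
      have := integral_prod_edges hmeas h01 hbern hpp0 hindep (edgesOf i A hiA)
      rw [card_edgesOf, hAc] at this
      rw [← this]
      congr 1
      funext ω
      exact prod_X_eq_edges hsym i A hiA ω
    rw [Finset.sum_congr rfl h2, Finset.sum_const, Finset.card_powersetCard,
      card_erase_univ, nsmul_eq_mul]
  rw [Finset.sum_congr rfl (fun i _ => h1 i), Finset.sum_const, Finset.card_univ,
    Fintype.card_fin, nsmul_eq_mul, mul_assoc]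

end Moments3
section Moments4

variable {n mm : ℕ} {Ω : Type*} [MeasurableSpace Ω] {μ : Measure Ω} [IsProbabilityMeasure μ]
  {X : Fin n → Fin n → Ω → ℝ} {pp : ℝ}

lemma integral_starCount_sq (hm : 1 ≤ mm)
    (hmeas : ∀ i j, Measurable (X i j)) (hsym : ∀ i j, X i j = X j i)
    (h01 : ∀ i j ω, X i j ω = 0 ∨ X i j ω = 1)
    (hbern : ∀ i j, i ≠ j → μ {ω | X i j ω = 1} = ENNReal.ofReal pp) (hpp0 : 0 ≤ pp)
    (hindep : iIndepFun
      (fun (q : {q : Fin n × Fin n // q.1 < q.2}) ω => X q.1.1 q.1.2 ω) μ) :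
    ∫ ω, (starCount n mm X ω) ^ 2 ∂μ
      = (n : ℝ) * (∑ s ∈ Finset.range (mm + 1), ((n - 1).choose mm : ℝ) * (mm.choose s : ℝ) *
          ((n - 1 - mm).choose (mm - s) : ℝ) * pp ^ (2 * mm - s))
        + (n : ℝ) * ((n - 1 : ℕ) : ℝ) * (((n - 1).choose mm : ℝ) ^ 2 * pp ^ (2 * mm)
          + ((n - 2).choose (mm - 1) : ℝ) ^ 2 * (pp ^ (2 * mm - 1) - pp ^ (2 * mm))) := by
  classical
  set P : Fin n → Finset (Finset (Fin n)) :=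
    fun i => (Finset.univ.erase i).powersetCard mm with hPdef
  set D : ℝ := ∑ s ∈ Finset.range (mm + 1), ((n - 1).choose mm : ℝ) * (mm.choose s : ℝ) *
    ((n - 1 - mm).choose (mm - s) : ℝ) * pp ^ (2 * mm - s) with hDdef
  set V : ℝ := ((n - 1).choose mm : ℝ) ^ 2 * pp ^ (2 * mm)
    + ((n - 2).choose (mm - 1) : ℝ) ^ 2 * (pp ^ (2 * mm - 1) - pp ^ (2 * mm)) with hVdef
  have expand : (fun ω => (starCount n mm X ω) ^ 2)
      = fun ω => ∑ i, ∑ i', ∑ A ∈ P i, ∑ A' ∈ P i',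
          (∏ j ∈ A, X i j ω) * ∏ j ∈ A', X i' j ω := by
    funext ω
    rw [starCount, sq, Finset.sum_mul_sum]
    exact Finset.sum_congr rfl fun i _ => Finset.sum_congr rfl fun i' _ =>
      Finset.sum_mul_sum _ _ _ _
  rw [expand, MeasureTheory.integral_finset_sum _
    (fun i _ => integrable_finset_sum _ (fun i' _ => integrable_finset_sum _
      (fun A _ => integrable_finset_sum _
        (fun A' _ => integrable_prod_prod hmeas h01 i i' A A'))))]
  have swap : ∀ i : Fin n,
      ∫ ω, ∑ i', ∑ A ∈ P i, ∑ A' ∈ P i', (∏ j ∈ A, X i j ω) * ∏ j ∈ A', X i' j ω ∂μ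
        = ∑ i', ∑ A ∈ P i, ∑ A' ∈ P i',
            ∫ ω, (∏ j ∈ A, X i j ω) * ∏ j ∈ A', X i' j ω ∂μ := by
    intro i
    rw [MeasureTheory.integral_finset_sum _ (fun i' _ => integrable_finset_sum _
      (fun A _ => integrable_finset_sum _
        (fun A' _ => integrable_prod_prod hmeas h01 i i' A A')))]
    refine Finset.sum_congr rfl fun i' _ => ?_
    rw [MeasureTheory.integral_finset_sum _ (fun A _ => integrable_finset_sum _
      (fun A' _ => integrable_prod_prod hmeas h01 i i' A A'))]
    refine Finset.sum_congr rfl fun A _ => ?_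
    rw [MeasureTheory.integral_finset_sum _
      (fun A' _ => integrable_prod_prod hmeas h01 i i' A A')]
  have key : ∀ i : Fin n,
      ∑ i', ∑ A ∈ P i, ∑ A' ∈ P i',
          ∫ ω, (∏ j ∈ A, X i j ω) * ∏ j ∈ A', X i' j ω ∂μ
        = D + ((n - 1 : ℕ) : ℝ) * V := by
    intro i
    rw [← Finset.add_sum_erase _ _ (Finset.mem_univ i)]
    congr 1
    · -- diagonal
      have hdiag : ∀ A ∈ P i, ∑ A' ∈ P i,
          ∫ ω, (∏ j ∈ A, X i j ω) * ∏ j ∈ A', X i j ω ∂μ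
            = ∑ s ∈ Finset.range (mm + 1), (mm.choose s : ℝ) *
                ((n - 1 - mm).choose (mm - s) : ℝ) * pp ^ (2 * mm - s) := by
        intro A hA
        obtain ⟨hiA, hAc⟩ := mem_P hA
        have hAsub : A ⊆ Finset.univ.erase i := (Finset.mem_powersetCard.mp hA).1
        have e1 : ∀ A' ∈ P i, ∫ ω, (∏ j ∈ A, X i j ω) * ∏ j ∈ A', X i j ω ∂μ
            = pp ^ (2 * mm - (A ∩ A').card) := by
          intro A' hA'
          obtain ⟨hiA', hA'c⟩ := mem_P hA'
          exact integral_pair_diag hmeas hsym h01 hbern hpp0 hindep i A A' hiA hiA' hAc hA'c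
        rw [Finset.sum_congr rfl e1]
        have hmaps : ∀ A' ∈ P i, (A ∩ A').card ∈ Finset.range (mm + 1) := by
          intro A' hA'
          rw [Finset.mem_range, Nat.lt_succ_iff]
          exact hAc ▸ Finset.card_le_card Finset.inter_subset_left
        rw [← Finset.sum_fiberwise_of_maps_to hmaps
          (fun A' => pp ^ (2 * mm - (A ∩ A').card))]
        refine Finset.sum_congr rfl fun s hs => ?_
        rw [Finset.mem_range, Nat.lt_succ_iff] at hs
        have e2 : ∀ A' ∈ (P i).filter (fun A' => (A ∩ A').card = s),
            pp ^ (2 * mm - (A ∩ A').card) = pp ^ (2 * mm - s) := by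
          intro A' hA'
          rw [(Finset.mem_filter.mp hA').2]
        rw [Finset.sum_congr rfl e2, Finset.sum_const, hPdef,
          card_powersetCard_filter_inter (Finset.univ.erase i) A hAsub hAc hs,
          card_erase_univ, nsmul_eq_mul]
        push_cast
        ring
      rw [Finset.sum_congr rfl hdiag, Finset.sum_const, hPdef, Finset.card_powersetCard,
        card_erase_univ, nsmul_eq_mul, hDdef, Finset.mul_sum]
      exact Finset.sum_congr rfl fun s _ => by ring
    · -- off-diagonal
      have hoff : ∀ i' ∈ Finset.univ.erase i, ∑ A ∈ P i, ∑ A' ∈ P i',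
          ∫ ω, (∏ j ∈ A, X i j ω) * ∏ j ∈ A', X i' j ω ∂μ = V := by
        intro i' hi'
        have hii' : i ≠ i' := fun h => (Finset.mem_erase.mp hi').1 h.symm
        have hn2 : n - 1 - 1 = n - 2 := by omega
        have inner : ∀ A ∈ P i, ∑ A' ∈ P i',
            ∫ ω, (∏ j ∈ A, X i j ω) * ∏ j ∈ A', X i' j ω ∂μ
              = ((n - 1).choose mm : ℝ) * pp ^ (2 * mm)
                + (if i' ∈ A then ((n - 2).choose (mm - 1) : ℝ) *
                    (pp ^ (2 * mm - 1) - pp ^ (2 * mm)) else 0) := by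
          intro A hA
          obtain ⟨hiA, hAc⟩ := mem_P hA
          have e1 : ∀ A' ∈ P i', ∫ ω, (∏ j ∈ A, X i j ω) * ∏ j ∈ A', X i' j ω ∂μ
              = if i' ∈ A ∧ i ∈ A' then pp ^ (2 * mm - 1) else pp ^ (2 * mm) := by
            intro A' hA'
            obtain ⟨hi'A', hA'c⟩ := mem_P hA'
            exact integral_pair_off hmeas hsym h01 hbern hpp0 hindep i i' hii' A A'
              hiA hi'A' hAc hA'c
          rw [Finset.sum_congr rfl e1]
          by_cases hmem : i' ∈ A
          · simp only [hmem, true_and]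
            have h3 : ∀ A' : Finset (Fin n), (if i ∈ A' then pp ^ (2 * mm - 1)
                else pp ^ (2 * mm)) = pp ^ (2 * mm)
                  + (if i ∈ A' then pp ^ (2 * mm - 1) - pp ^ (2 * mm) else 0) := by
              intro A'; split_ifs <;> ring
            rw [Finset.sum_congr rfl (fun A' _ => h3 A'), Finset.sum_add_distrib,
              Finset.sum_const, ← Finset.sum_filter, Finset.sum_const, hPdef,
              card_powersetCard_filter_mem (Finset.univ.erase i')
                (Finset.mem_erase.mpr ⟨hii', Finset.mem_univ i⟩) hm,
              Finset.card_powersetCard, card_erase_univ, hn2,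
              nsmul_eq_mul, nsmul_eq_mul]
            simp
          · simp only [hmem, false_and, if_neg, if_false]
            rw [Finset.sum_const, hPdef, Finset.card_powersetCard, card_erase_univ,
              nsmul_eq_mul, add_zero]
        rw [Finset.sum_congr rfl inner, Finset.sum_add_distrib, Finset.sum_const,
          ← Finset.sum_filter, Finset.sum_const, hPdef,
          card_powersetCard_filter_mem (Finset.univ.erase i) hi' hm,
          Finset.card_powersetCard, card_erase_univ, hn2,
          nsmul_eq_mul, nsmul_eq_mul, hVdef]
        ring
      rw [Finset.sum_congr rfl hoff, Finset.sum_const, Finset.card_erase_of_mem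
        (Finset.mem_univ i), Finset.card_univ, Fintype.card_fin, nsmul_eq_mul]
  rw [Finset.sum_congr rfl (fun i _ => (swap i).trans (key i)), Finset.sum_const,
    Finset.card_univ, Fintype.card_fin, nsmul_eq_mul]
  ring

end Moments4
section Asymptotics

lemma tendsto_choose_div_pow (a k : ℕ) :
    Tendsto (fun n : ℕ => ((n - a).choose k : ℝ) / (n : ℝ) ^ k) atTop
      (nhds (1 / (k.factorial : ℝ))) := by
  have hfac : ∀ i : ℕ, Tendsto (fun n : ℕ => 1 - ((a + i : ℕ) : ℝ) / n) atTop (nhds 1) := by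
    intro i
    have h0 : Tendsto (fun n : ℕ => ((a + i : ℕ) : ℝ) / n) atTop (nhds 0) :=
      tendsto_const_div_atTop_nhds_zero_nat _
    simpa using (tendsto_const_nhds (x := (1:ℝ)) (f := atTop)).sub h0
  have hprod : Tendsto (fun n : ℕ => ∏ i ∈ Finset.range k, (1 - ((a + i : ℕ) : ℝ) / n)) atTop
      (nhds 1) := by
    have := tendsto_finset_prod (Finset.range k)
      (fun i (_ : i ∈ Finset.range k) => hfac i)
    simpa using this
  have hmain : Tendsto (fun n : ℕ =>
      (1 / (k.factorial : ℝ)) * ∏ i ∈ Finset.range k, (1 - ((a + i : ℕ) : ℝ) / n)) atTop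
      (nhds (1 / (k.factorial : ℝ))) := by
    simpa using hprod.const_mul (1 / (k.factorial : ℝ))
  refine hmain.congr' ?_
  filter_upwards [eventually_ge_atTop (a + k + 1)] with n hn
  have hn0 : (0:ℝ) < (n:ℝ) := by
    have : 0 < n := by omega
    exact_mod_cast this
  have hd : ((n - a).descFactorial k : ℝ) = ∏ i ∈ Finset.range k, ((n : ℝ) - (a + i : ℕ)) := by
    rw [Nat.descFactorial_eq_prod_range]
    push_cast [Nat.cast_prod]
    refine Finset.prod_congr rfl fun i hi => ?_
    rw [Finset.mem_range] at hi
    have h1 : i ≤ n - a := by omega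
    have h2 : a ≤ n := by omega
    push_cast [Nat.cast_sub h1, Nat.cast_sub h2]
    ring
  have hchoose : ((n - a).choose k : ℝ) = ((n - a).descFactorial k : ℝ) / (k.factorial : ℝ) := by
    have := Nat.descFactorial_eq_factorial_mul_choose (n - a) k
    have h2 : ((n - a).descFactorial k : ℝ) = (k.factorial : ℝ) * ((n - a).choose k : ℝ) := by
      exact_mod_cast congrArg (Nat.cast (R := ℝ)) this
    rw [h2]
    field_simp
  rw [hchoose, hd]
  have hne : ((n:ℝ))^k ≠ 0 := pow_ne_zero _ hn0.ne'
  have hfne : (k.factorial : ℝ) ≠ 0 := by exact_mod_cast k.factorial_ne_zero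
  have hfactor : ∏ i ∈ Finset.range k, (1 - ((a + i : ℕ) : ℝ) / n)
      = (∏ i ∈ Finset.range k, ((n : ℝ) - (a + i : ℕ))) / (n : ℝ) ^ k := by
    have h4 : ∀ i ∈ Finset.range k, 1 - ((a + i : ℕ) : ℝ) / n
        = ((n : ℝ) - (a + i : ℕ)) / (n : ℝ) := by
      intro i _
      field_simp
    rw [Finset.prod_congr rfl h4, Finset.prod_div_distrib, Finset.prod_const,
      Finset.card_range]
  rw [hfactor]
  field_simp

end Asymptotics
/-- If `n p(n) → c > 0`, then `Var[S_{m+1,n}] / n → c^{2m-1}/((m-1)!)² +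
∑_{s=1}^m c^{2m-s}/(s! ((m-s)!)²)` for the Erdős–Rényi graph `G(n, p(n))`. -/
theorem stmt_16 (m : ℕ) (hm : 1 ≤ m) (c : ℝ) (hc : 0 < c)
    (p : ℕ → ℝ) (hp0 : ∀ n, 0 ≤ p n) (hp1 : ∀ n, p n ≤ 1)
    (Ω : ℕ → Type*) [∀ n, MeasurableSpace (Ω n)]
    (μ : (n : ℕ) → Measure (Ω n)) (hprob : ∀ n, IsProbabilityMeasure (μ n))
    (X : (n : ℕ) → Fin n → Fin n → Ω n → ℝ)
    (hmeas : ∀ n i j, Measurable (X n i j))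
    (hsym : ∀ n i j, X n i j = X n j i)
    (hdiag : ∀ n i, X n i i = 0)
    (h01 : ∀ n i j ω, X n i j ω = 0 ∨ X n i j ω = 1)
    (hbern : ∀ n i j, i ≠ j → μ n {ω | X n i j ω = 1} = ENNReal.ofReal (p n))
    (hindep : ∀ n, iIndepFun
      (fun (q : {q : Fin n × Fin n // q.1 < q.2}) ω => X n q.1.1 q.1.2 ω) (μ n))
    (hlim : Tendsto (fun n : ℕ => (n : ℝ) * p n) atTop (nhds c)) :
    Tendsto (fun n =>
        ((∫ ω, (starCount n m (X n) ω) ^ 2 ∂ μ n) -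
          (∫ ω, starCount n m (X n) ω ∂ μ n) ^ 2) / n)
      atTop
      (nhds (c ^ (2 * m - 1) / ((m - 1).factorial : ℝ) ^ 2 +
        ∑ s ∈ Finset.Icc 1 m,
          c ^ (2 * m - s) / ((s.factorial : ℝ) * ((m - s).factorial : ℝ) ^ 2))) := by
  classical
  -- exact variance formula
  have hVar : ∀ nn : ℕ,
      (∫ ω, (starCount nn m (X nn) ω) ^ 2 ∂ μ nn) -
        (∫ ω, starCount nn m (X nn) ω ∂ μ nn) ^ 2
      = (nn : ℝ) * (∑ s ∈ Finset.range (m + 1), ((nn - 1).choose m : ℝ) * (m.choose s : ℝ) *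
            ((nn - 1 - m).choose (m - s) : ℝ) * (p nn) ^ (2 * m - s))
          + (nn : ℝ) * ((nn - 1 : ℕ) : ℝ) * (((nn - 1).choose m : ℝ) ^ 2 * (p nn) ^ (2 * m)
            + ((nn - 2).choose (m - 1) : ℝ) ^ 2 * ((p nn) ^ (2 * m - 1) - (p nn) ^ (2 * m)))
          - ((nn : ℝ) * ((nn - 1).choose m : ℝ) * (p nn) ^ m) ^ 2 := by
    intro nn
    haveI := hprob nn
    rw [integral_starCount_sq hm (hmeas nn) (hsym nn) (h01 nn) (hbern nn) (hp0 nn) (hindep nn),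
      integral_starCount (hmeas nn) (hsym nn) (h01 nn) (hbern nn) (hp0 nn) (hindep nn)]
  -- split range sum
  have hsplit : ∀ F : ℕ → ℝ,
      ∑ s ∈ Finset.range (m + 1), F s = F 0 + ∑ s ∈ Finset.Icc 1 m, F s := by
    intro F
    have h1 : Finset.range (m + 1) = insert 0 (Finset.Icc 1 m) := by
      ext x
      simp only [Finset.mem_range, Finset.mem_insert, Finset.mem_Icc, Nat.lt_succ_iff]
      omega
    rw [h1, Finset.sum_insert (by simp)]
  -- the simplified per-n expression
  set G : ℕ → ℝ := fun nn =>
    (∑ s ∈ Finset.Icc 1 m, ((nn - 1).choose m : ℝ) * (m.choose s : ℝ) *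
        ((nn - 1 - m).choose (m - s) : ℝ) * (p nn) ^ (2 * m - s))
    + ((nn - 1 : ℕ) : ℝ) * ((nn - 2).choose (m - 1) : ℝ) ^ 2 * (p nn) ^ (2 * m - 1)
    + (((nn - 1).choose m : ℝ) * ((nn - 1 - m).choose m : ℝ) * (p nn) ^ (2 * m)
        - ((nn - 1).choose m : ℝ) ^ 2 * (p nn) ^ (2 * m)
        - ((nn - 1 : ℕ) : ℝ) * ((nn - 2).choose (m - 1) : ℝ) ^ 2 * (p nn) ^ (2 * m))
    with hGdef
  -- limits of the building blocks
  have lN : Tendsto (fun nn : ℕ => ((nn - 1).choose m : ℝ) / (nn : ℝ) ^ m) atTop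
      (nhds (1 / (m.factorial : ℝ))) := tendsto_choose_div_pow 1 m
  have lK : Tendsto (fun nn : ℕ => ((nn - 2).choose (m - 1) : ℝ) / (nn : ℝ) ^ (m - 1)) atTop
      (nhds (1 / ((m - 1).factorial : ℝ))) := tendsto_choose_div_pow 2 (m - 1)
  have lC2 : ∀ k : ℕ, Tendsto (fun nn : ℕ => ((nn - 1 - m).choose k : ℝ) / (nn : ℝ) ^ k) atTop
      (nhds (1 / (k.factorial : ℝ))) := by
    intro k
    have := tendsto_choose_div_pow (1 + m) k
    simpa [Nat.sub_sub] using this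
  have lfrac : Tendsto (fun nn : ℕ => ((nn - 1 : ℕ) : ℝ) / (nn : ℝ)) atTop (nhds 1) := by
    have h0 : Tendsto (fun nn : ℕ => 1 - 1 / (nn : ℝ)) atTop (nhds 1) := by
      simpa using (tendsto_const_nhds (x := (1:ℝ)) (f := atTop)).sub
        tendsto_one_div_atTop_nhds_zero_nat
    refine h0.congr' ?_
    filter_upwards [eventually_ge_atTop 1] with nn hnn
    have hn0 : ((nn : ℕ) : ℝ) ≠ 0 := by
      have : (0:ℕ) < nn := hnn
      exact_mod_cast this.ne'
    rw [Nat.cast_sub hnn]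
    field_simp
    norm_num
  have linv : Tendsto (fun nn : ℕ => 1 / (nn : ℝ)) atTop (nhds 0) :=
    tendsto_one_div_atTop_nhds_zero_nat
  have hfacne : ∀ k : ℕ, ((k.factorial : ℝ)) ≠ 0 := fun k => by
    exact_mod_cast k.factorial_ne_zero
  -- limit of each sum term
  have lsum : Tendsto (fun nn : ℕ => ∑ s ∈ Finset.Icc 1 m, ((nn - 1).choose m : ℝ) *
      (m.choose s : ℝ) * ((nn - 1 - m).choose (m - s) : ℝ) * (p nn) ^ (2 * m - s)) atTop
      (nhds (∑ s ∈ Finset.Icc 1 m,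
        c ^ (2 * m - s) / ((s.factorial : ℝ) * ((m - s).factorial : ℝ) ^ 2))) := by
    refine tendsto_finset_sum _ (fun s hs => ?_)
    rw [Finset.mem_Icc] at hs
    obtain ⟨hs1, hs2⟩ := hs
    have lterm := ((lN.mul_const ((m.choose s : ℝ))).mul (lC2 (m - s))).mul
      (hlim.pow (2 * m - s))
    have hval : 1 / (m.factorial : ℝ) * (m.choose s : ℝ) * (1 / ((m - s).factorial : ℝ))
        * c ^ (2 * m - s)
        = c ^ (2 * m - s) / ((s.factorial : ℝ) * ((m - s).factorial : ℝ) ^ 2) := by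
      rw [Nat.cast_choose ℝ hs2]
      field_simp
    rw [← hval]
    refine lterm.congr' ?_
    filter_upwards [eventually_ge_atTop 1] with nn hnn
    have hn0 : ((nn : ℕ) : ℝ) ≠ 0 := by
      have : (0:ℕ) < nn := hnn
      exact_mod_cast this.ne'
    have hpow : ((nn : ℕ) : ℝ) ^ (2 * m - s) = (nn : ℝ) ^ m * (nn : ℝ) ^ (m - s) := by
      rw [← pow_add]
      congr 1
      omega
    rw [mul_pow, hpow]
    field_simp
  -- limit of the (2m-1) term
  have lmain : Tendsto (fun nn : ℕ => ((nn - 1 : ℕ) : ℝ) * ((nn - 2).choose (m - 1) : ℝ) ^ 2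
      * (p nn) ^ (2 * m - 1)) atTop
      (nhds (c ^ (2 * m - 1) / ((m - 1).factorial : ℝ) ^ 2)) := by
    have lterm := ((lfrac.mul (lK.mul lK))).mul (hlim.pow (2 * m - 1))
    have hval : 1 * (1 / ((m - 1).factorial : ℝ) * (1 / ((m - 1).factorial : ℝ)))
        * c ^ (2 * m - 1)
        = c ^ (2 * m - 1) / ((m - 1).factorial : ℝ) ^ 2 := by
      field_simp
    rw [← hval]
    refine lterm.congr' ?_
    filter_upwards [eventually_ge_atTop 1] with nn hnn
    have hn0 : ((nn : ℕ) : ℝ) ≠ 0 := by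
      have : (0:ℕ) < nn := hnn
      exact_mod_cast this.ne'
    have hpow : ((nn : ℕ) : ℝ) ^ (2 * m - 1)
        = (nn : ℝ) * ((nn : ℝ) ^ (m - 1) * (nn : ℝ) ^ (m - 1)) := by
      rw [← pow_add, ← pow_succ']
      congr 1
      omega
    rw [mul_pow, hpow]
    field_simp
  -- vanishing remainder
  have lrem : Tendsto (fun nn : ℕ =>
      ((nn - 1).choose m : ℝ) * ((nn - 1 - m).choose m : ℝ) * (p nn) ^ (2 * m)
        - ((nn - 1).choose m : ℝ) ^ 2 * (p nn) ^ (2 * m)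
        - ((nn - 1 : ℕ) : ℝ) * ((nn - 2).choose (m - 1) : ℝ) ^ 2 * (p nn) ^ (2 * m)) atTop
      (nhds 0) := by
    have t1 : Tendsto (fun nn : ℕ => ((nn - 1).choose m : ℝ) * ((nn - 1 - m).choose m : ℝ)
        * (p nn) ^ (2 * m)) atTop
        (nhds (1 / (m.factorial : ℝ) * (1 / (m.factorial : ℝ)) * c ^ (2 * m))) := by
      have lterm := (lN.mul (lC2 m)).mul (hlim.pow (2 * m))
      refine lterm.congr' ?_
      filter_upwards [eventually_ge_atTop 1] with nn hnn
      have hn0 : ((nn : ℕ) : ℝ) ≠ 0 := by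
        have : (0:ℕ) < nn := hnn
        exact_mod_cast this.ne'
      have hpow : ((nn : ℕ) : ℝ) ^ (2 * m) = (nn : ℝ) ^ m * (nn : ℝ) ^ m := by
        rw [← pow_add]; congr 1; omega
      rw [mul_pow, hpow]
      field_simp
    have t2 : Tendsto (fun nn : ℕ => ((nn - 1).choose m : ℝ) ^ 2 * (p nn) ^ (2 * m)) atTop
        (nhds (1 / (m.factorial : ℝ) * (1 / (m.factorial : ℝ)) * c ^ (2 * m))) := by
      have lterm := (lN.mul lN).mul (hlim.pow (2 * m))
      refine lterm.congr' ?_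
      filter_upwards [eventually_ge_atTop 1] with nn hnn
      have hn0 : ((nn : ℕ) : ℝ) ≠ 0 := by
        have : (0:ℕ) < nn := hnn
        exact_mod_cast this.ne'
      have hpow : ((nn : ℕ) : ℝ) ^ (2 * m) = (nn : ℝ) ^ m * (nn : ℝ) ^ m := by
        rw [← pow_add]; congr 1; omega
      rw [mul_pow, hpow]
      field_simp
    have t3 : Tendsto (fun nn : ℕ => ((nn - 1 : ℕ) : ℝ) * ((nn - 2).choose (m - 1) : ℝ) ^ 2
        * (p nn) ^ (2 * m)) atTop (nhds 0) := by
      have lterm := ((lfrac.mul linv).mul (lK.mul lK)).mul (hlim.pow (2 * m))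
      have : (1 * 0 * (1 / ((m - 1).factorial : ℝ) * (1 / ((m - 1).factorial : ℝ)))
          * c ^ (2 * m)) = 0 := by ring
      rw [this] at lterm
      refine lterm.congr' ?_
      filter_upwards [eventually_ge_atTop 1] with nn hnn
      have hn0 : ((nn : ℕ) : ℝ) ≠ 0 := by
        have : (0:ℕ) < nn := hnn
        exact_mod_cast this.ne'
      have hpow : ((nn : ℕ) : ℝ) ^ (2 * m)
          = (nn : ℝ) * (nn : ℝ) * ((nn : ℝ) ^ (m - 1) * (nn : ℝ) ^ (m - 1)) := by
        have h2m : 2 * m = 1 + 1 + ((m - 1) + (m - 1)) := by omega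
        rw [h2m]
        ring
      rw [mul_pow, hpow]
      field_simp
    have := (t1.sub t2).sub t3
    simpa using this
  -- assemble
  have hGlim : Tendsto G atTop (nhds (c ^ (2 * m - 1) / ((m - 1).factorial : ℝ) ^ 2 +
      ∑ s ∈ Finset.Icc 1 m,
        c ^ (2 * m - s) / ((s.factorial : ℝ) * ((m - s).factorial : ℝ) ^ 2))) := by
    have := (lsum.add lmain).add lrem
    rw [hGdef]
    have hpt : (∑ s ∈ Finset.Icc 1 m,
        c ^ (2 * m - s) / ((s.factorial : ℝ) * ((m - s).factorial : ℝ) ^ 2))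
        + c ^ (2 * m - 1) / ((m - 1).factorial : ℝ) ^ 2 + 0
        = c ^ (2 * m - 1) / ((m - 1).factorial : ℝ) ^ 2 +
          ∑ s ∈ Finset.Icc 1 m,
            c ^ (2 * m - s) / ((s.factorial : ℝ) * ((m - s).factorial : ℝ) ^ 2) := by
      ring
    rw [← hpt]
    exact this
  refine hGlim.congr' ?_
  filter_upwards [eventually_ge_atTop 1] with nn hnn
  have hn0 : ((nn : ℕ) : ℝ) ≠ 0 := by
    have : (0:ℕ) < nn := hnn
    exact_mod_cast this.ne'
  rw [hVar nn, hsplit (fun s => ((nn - 1).choose m : ℝ) * (m.choose s : ℝ) *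
    ((nn - 1 - m).choose (m - s) : ℝ) * (p nn) ^ (2 * m - s))]
  simp only [Nat.choose_zero_right, Nat.cast_one, Nat.sub_zero, mul_one]
  rw [hGdef]
  have h2m : 2 * m = m + m := by omega
  rw [h2m]
  field_simp
  rw [Nat.cast_sub hnn, Nat.cast_one]
  ring_nf
  congr 1
  exact Finset.sum_congr rfl fun x _ => by ring
end
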